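/- Fix blocks B₁, …, B_D and let χ : ℤ → Fin D be pseudo-ergodic. Then σ(J(χ')) ⊆ σ(J(χ)) for every block sequence χ' : ℤ → Fin D. -/

import Mathlib

/-- A bi-infinite sequence is pseudo-ergodic if it contains every finite word. -/
def PseudoErgodicZ {D : ℕ} (χ : ℤ → Fin D) : Prop :=
  ∀ M : ℕ, 1 ≤ M → ∀ w : Fin M → Fin D, ∃ j : ℤ, ∀ k : Fin M, χ (j + (k : ℕ)) = w k

noncomputable section

/-- A block: a nonempty finite list of triples `(v, ℓ, s)` of positive reals. -/
def Block : Type :=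
  {L : List (ℝ × ℝ × ℝ) // L ≠ [] ∧ ∀ t ∈ L, 0 < t.1 ∧ 0 < t.2.1 ∧ 0 < t.2.2}

/-- The single-resonator propagation matrix `P^λ_{ℓ,s,v}`. -/
def propMat (lam ℓ s v : ℝ) : Matrix (Fin 2) (Fin 2) ℝ :=
  !![1 - s * ℓ * lam / v ^ 2, s; -(ℓ * lam / v ^ 2), 1]

/-- Propagation matrix of a resonator triple `(v, ℓ, s)`. -/
def propOf (lam : ℝ) (t : ℝ × ℝ × ℝ) : Matrix (Fin 2) (Fin 2) ℝ :=
  propMat lam t.2.1 t.2.2 t.1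

/-- The block propagation matrix `𝒫^λ_B = P^λ_{ℓ_L,s_L,v_L} ⋯ P^λ_{ℓ₁,s₁,v₁}`. -/
def blockMat (lam : ℝ) (Bd : Block) : Matrix (Fin 2) (Fin 2) ℝ :=
  ((Bd.1.map (propOf lam)).reverse).prod

/-- `data` (with block-start indices `st`) is the bi-infinite concatenation of the
blocks `B (χ j)`. -/
def IsConcat {D : ℕ} (B : Fin D → Block) (χ : ℤ → Fin D)
    (data : ℤ → ℝ × ℝ × ℝ) (st : ℤ → ℤ) : Prop :=
  st 0 = 0 ∧ (∀ j : ℤ, st (j + 1) = st j + ((B (χ j)).1.length : ℤ)) ∧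
    ∀ (j : ℤ) (k : ℕ) (hk : k < (B (χ j)).1.length),
      data (st j + (k : ℤ)) = (B (χ j)).1.get ⟨k, hk⟩

/-- `ℓ²(ℤ)`. -/
abbrev Hint := lp (fun _ : ℤ => ℝ) 2
/-- `ℓ²(ℤ≥0)`. -/
abbrev Hnat := lp (fun _ : ℕ => ℝ) 2
/-- `ℓ²(ℤ<0)`. -/
abbrev Hneg := lp (fun _ : {i : ℤ // i < 0} => ℝ) 2

/-- The off-diagonal band `a(i) = −v_i v_{i+1}/(s_i √(ℓ_i ℓ_{i+1}))`,
with `data i = (v_i, ℓ_i, s_i)`. -/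
def aSeq (data : ℤ → ℝ × ℝ × ℝ) (i : ℤ) : ℝ :=
  -((data i).1 * (data (i + 1)).1) /
    ((data i).2.2 * Real.sqrt ((data i).2.1 * (data (i + 1)).2.1))

/-- The diagonal band `b(i) = (v_i²/ℓ_i)(1/s_{i−1} + 1/s_i)`. -/
def bSeq (data : ℤ → ℝ × ℝ × ℝ) (i : ℤ) : ℝ :=
  ((data i).1 ^ 2 / (data i).2.1) * (1 / (data (i - 1)).2.2 + 1 / (data i).2.2)

/-- `J` is the Jacobi operator on `ℓ²(ℤ)` with bands `a`, `b` built from `data`. -/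
def IsJacobiOf (data : ℤ → ℝ × ℝ × ℝ) (J : Hint →L[ℝ] Hint) : Prop :=
  ∀ (x : Hint) (i : ℤ),
    J x i = aSeq data (i - 1) * x (i - 1) + bSeq data i * x i + aSeq data i * x (i + 1)

/-- `Jp` is the positive semi-infinite Jacobi operator with corner entry
`b(0) = v₀²/(ℓ₀s₀)`. -/
def IsJacobiPlusOf (data : ℤ → ℝ × ℝ × ℝ) (Jp : Hnat →L[ℝ] Hnat) : Prop :=
  (∀ x : Hnat,
      Jp x 0 = (data 0).1 ^ 2 / ((data 0).2.1 * (data 0).2.2) * x 0 + aSeq data 0 * x 1) ∧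
  (∀ (x : Hnat) (n : ℕ),
      Jp x (n + 1) = aSeq data (n : ℤ) * x n + bSeq data ((n : ℤ) + 1) * x (n + 1) +
        aSeq data ((n : ℤ) + 1) * x (n + 2))

/-- `Jm` is the negative semi-infinite Jacobi operator with corner entry
`b(−1) = v₋₁²/(ℓ₋₁s₋₂)`. -/
def IsJacobiMinusOf (data : ℤ → ℝ × ℝ × ℝ) (Jm : Hneg →L[ℝ] Hneg) : Prop :=
  (∀ x : Hneg,
      Jm x ⟨-1, by norm_num⟩ =
        (data (-1)).1 ^ 2 / ((data (-1)).2.1 * (data (-2)).2.2) * x ⟨-1, by norm_num⟩ +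
          aSeq data (-2) * x ⟨-2, by norm_num⟩) ∧
  (∀ (x : Hneg) (i : ℤ) (hi : i < -1),
      Jm x ⟨i, by omega⟩ =
        aSeq data (i - 1) * x ⟨i - 1, by omega⟩ + bSeq data i * x ⟨i, by omega⟩ +
          aSeq data i * x ⟨i + 1, by omega⟩)

/-- The reflection-doubling of a semi-infinite sequence. -/
def reflDouble {D : ℕ} (χp : ℕ → Fin D) : ℤ → Fin D :=
  fun i => if 0 ≤ i then χp i.toNat else χp (-i - 1).toNat

namespace Stmt10Aux

open scoped InnerProductSpace

lemma block_len_pos (Bd : Block) : 0 < Bd.1.length := List.length_pos_iff.mpr Bd.2.1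

variable {D : ℕ} {B : Fin D → Block} {χ χ' : ℤ → Fin D} {data data' : ℤ → ℝ × ℝ × ℝ}
  {st st' : ℤ → ℤ}

lemma st_step (h : IsConcat B χ data st) (j : ℤ) : st j + 1 ≤ st (j + 1) := by
  have h1 := h.2.1 j
  have hl : (1 : ℤ) ≤ ((B (χ j)).1.length : ℤ) := by exact_mod_cast block_len_pos _
  omega

lemma le_st (h : IsConcat B χ data st) (j : ℤ) (hj : 0 ≤ j) : j ≤ st j := by
  refine Int.le_induction (motive := fun j _ => j ≤ st j) ?_ ?_ j hj
  · simp [h.1]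
  · intro n hn ih
    have := st_step h n; omega

lemma st_le (h : IsConcat B χ data st) (j : ℤ) (hj : j ≤ 0) : st j ≤ j := by
  refine Int.le_induction_down (motive := fun j _ => st j ≤ j) ?_ ?_ j hj
  · simp [h.1]
  · intro n hn ih
    have := st_step h (n - 1); simp only [sub_add_cancel] at this; omega

lemma concat_match (h : IsConcat B χ data st) (h' : IsConcat B χ' data' st')
    (j₀ j : ℤ) (M : ℕ) (hw : ∀ k : ℕ, k < M → χ (j₀ + k) = χ' (j + k)) :
    ∀ m : ℕ, m ≤ M →
      st (j₀ + m) - st j₀ = st' (j + m) - st' j ∧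
      ∀ t : ℤ, 0 ≤ t → t < st' (j + m) - st' j → data (st j₀ + t) = data' (st' j + t) := by
  intro m
  induction m with
  | zero =>
    intro _
    refine ⟨by simp, ?_⟩
    intro t ht hlt
    simp only [Nat.cast_zero, add_zero] at hlt
    omega
  | succ m ih =>
    intro hm
    obtain ⟨ih1, ih2⟩ := ih (by omega)
    have hχeq : χ (j₀ + m) = χ' (j + m) := hw m (by omega)
    have e1 := h.2.1 (j₀ + (m : ℤ))
    have e1' := h'.2.1 (j + (m : ℤ))
    have hcast : ∀ z : ℤ, z + ((m + 1 : ℕ) : ℤ) = z + (m : ℤ) + 1 := by intro z; push_cast; ring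
    rw [hcast, hcast]
    rw [hχeq] at e1
    constructor
    · omega
    · intro t ht hlt
      by_cases hcase : t < st' (j + m) - st' j
      · exact ih2 t ht hcase
      · set L := ((B (χ' (j + m))).1.length : ℤ) with hL
        have hk0 : 0 ≤ t - (st' (j + m) - st' j) := by omega
        set k : ℕ := (t - (st' (j + m) - st' j)).toNat with hkdef
        have hk : (k : ℤ) = t - (st' (j + m) - st' j) := Int.toNat_of_nonneg hk0
        have hklt : k < (B (χ' (j + m))).1.length := by
          have h5 : (k : ℤ) < L := by omega
          rw [hL] at h5
          exact_mod_cast h5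
        have hd' := h'.2.2 (j + m) k hklt
        have hd := h.2.2 (j₀ + m)
        rw [hχeq] at hd
        have hd2 := hd k hklt
        have e2 : st j₀ + t = st (j₀ + m) + k := by omega
        have e3 : st' j + t = st' (j + m) + k := by omega
        rw [e2, e3, hd2, hd']

lemma window (hχ : PseudoErgodicZ χ) (h : IsConcat B χ data st)
    (h' : IsConcat B χ' data' st') (N : ℕ) :
    ∃ τ : ℤ, ∀ i : ℤ, -(N : ℤ) ≤ i → i ≤ (N : ℤ) → data (i + τ) = data' i := by
  set M : ℕ := 2 * N + 2 with hM
  set j : ℤ := -((N : ℤ) + 1) with hj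
  obtain ⟨j₀, hj₀⟩ := hχ M (by omega) (fun k => χ' (j + (k : ℕ)))
  have hw : ∀ k : ℕ, k < M → χ (j₀ + k) = χ' (j + k) := by
    intro k hk
    simpa using hj₀ ⟨k, hk⟩
  obtain ⟨-, hmatch⟩ := concat_match h h' j₀ j M hw M le_rfl
  refine ⟨st j₀ - st' j, ?_⟩
  intro i h1 h2
  have hstj : st' j ≤ j := st_le h' j (by omega)
  have hstM : (j + (M : ℤ)) ≤ st' (j + (M : ℤ)) := le_st h' _ (by push_cast; omega)
  have hkey := hmatch (i - st' j) (by omega) (by push_cast at hstM ⊢; omega)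
  have e1 : i + (st j₀ - st' j) = st j₀ + (i - st' j) := by ring
  have e2 : st' j + (i - st' j) = i := by ring
  rw [e1, hkey, e2]


section Hilbert

open scoped ComplexConjugate

lemma real_inner_def (a b : ℝ) : ⟪a, b⟫_ℝ = a * b := by
  simp [RCLike.inner_apply]
  ring

lemma clm_eq_zero_of_singles (F : Hint →L[ℝ] ℝ)
    (h : ∀ (i : ℤ) (c : ℝ), F (lp.single 2 i c) = 0) (x : Hint) : F x = 0 := by
  have hs : HasSum (fun i : ℤ => lp.single 2 i (x i)) x :=
    lp.hasSum_single (by norm_num) x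
  have h0 : HasSum (fun _ : ℤ => (0 : ℝ)) (F x) := by
    simpa [h] using F.hasSum hs
  simpa using h0.unique hasSum_zero

/-- entry function of the Jacobi matrix -/
def ent (data : ℤ → ℝ × ℝ × ℝ) (i m : ℤ) : ℝ :=
  if i = m - 1 then aSeq data (m - 1)
  else if i = m then bSeq data m
  else if i = m + 1 then aSeq data m else 0

lemma ent_symm (data : ℤ → ℝ × ℝ × ℝ) (i m : ℤ) : ent data i m = ent data m i := by
  unfold ent
  split_ifs <;>
    first
      | rfl
      | (exfalso; omega)
      | exact congrArg (aSeq data) (by omega)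
      | exact congrArg (bSeq data) (by omega)

lemma single_coord {data : ℤ → ℝ × ℝ × ℝ} {J : Hint →L[ℝ] Hint} (hJ : IsJacobiOf data J)
    (i : ℤ) (c : ℝ) (m : ℤ) :
    J (lp.single 2 i c) m = ent data i m * c := by
  rw [hJ]
  unfold ent
  simp only [lp.single_apply, Pi.single_apply, eq_rec_constant, dite_eq_ite]
  split_ifs <;> first | ring1 | (exfalso; omega)

lemma jacobi_symm {data : ℤ → ℝ × ℝ × ℝ} {J : Hint →L[ℝ] Hint} (hJ : IsJacobiOf data J)
    (x y : Hint) : ⟪J x, y⟫_ℝ = ⟪x, J y⟫_ℝ := by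
  have hsingle : ∀ (i : ℤ) (c : ℝ) (j : ℤ) (d : ℝ),
      ⟪J (lp.single 2 i c), lp.single 2 j d⟫_ℝ = ⟪lp.single 2 i c, J (lp.single 2 j d)⟫_ℝ := by
    intro i c j d
    rw [lp.inner_single_right, lp.inner_single_left, single_coord hJ, single_coord hJ,
      real_inner_def, real_inner_def, ent_symm]
    ring
  have hstage2 : ∀ (i : ℤ) (c : ℝ) (z : Hint),
      ⟪J (lp.single 2 i c), z⟫_ℝ = ⟪lp.single 2 i c, J z⟫_ℝ := by
    intro i c z
    have hz := clm_eq_zero_of_singles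
      (innerSL ℝ (J (lp.single 2 i c)) - (innerSL ℝ (lp.single 2 i c)).comp J)
      (fun j d => by
        simp only [ContinuousLinearMap.sub_apply, ContinuousLinearMap.comp_apply,
          innerSL_apply_apply]
        rw [hsingle]
        ring) z
    simp only [ContinuousLinearMap.sub_apply, ContinuousLinearMap.comp_apply,
      innerSL_apply_apply] at hz
    linarith
  have hz := clm_eq_zero_of_singles
    ((innerSL ℝ y).comp J - innerSL ℝ (J y))
    (fun i c => by
      simp only [ContinuousLinearMap.sub_apply, ContinuousLinearMap.comp_apply,
        innerSL_apply_apply]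
      rw [real_inner_comm (J (lp.single 2 i c)) y, hstage2,
        real_inner_comm (J y) (lp.single 2 i c)]
      ring) x
  simp only [ContinuousLinearMap.sub_apply, ContinuousLinearMap.comp_apply,
    innerSL_apply_apply] at hz
  rw [real_inner_comm y (J x), real_inner_comm (J y) x]
  linarith

lemma norm_eq_of_shift (τ : ℤ) (u v : Hint) (h : ∀ k : ℤ, u k = v (k - τ)) : ‖u‖ = ‖v‖ := by
  have hsq : ‖u‖ ^ 2 = ‖v‖ ^ 2 := by
    rw [← real_inner_self_eq_norm_sq, ← real_inner_self_eq_norm_sq,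
      lp.inner_eq_tsum, lp.inner_eq_tsum]
    have hre := (Equiv.subRight τ).tsum_eq (fun m : ℤ => ⟪v m, v m⟫_ℝ)
    simp only [Equiv.subRight_apply] at hre
    rw [← hre]
    congr 1
    funext k
    rw [h k]
  have h1 : (0:ℝ) ≤ ‖u‖ := norm_nonneg u
  have h2 : (0:ℝ) ≤ ‖v‖ := norm_nonneg v
  nlinarith

end Hilbert

end Stmt10Aux

open scoped InnerProductSpace

theorem stmt_10 (D : ℕ) (B : Fin D → Block) (χ : ℤ → Fin D) (hχ : PseudoErgodicZ χ)
    (data : ℤ → ℝ × ℝ × ℝ) (st : ℤ → ℤ) (hconcat : IsConcat B χ data st)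
    (J : Hint →L[ℝ] Hint) (hJ : IsJacobiOf data J)
    (χ' : ℤ → Fin D) (data' : ℤ → ℝ × ℝ × ℝ) (st' : ℤ → ℤ)
    (hconcat' : IsConcat B χ' data' st')
    (J' : Hint →L[ℝ] Hint) (hJ' : IsJacobiOf data' J') :
    spectrum ℝ J' ⊆ spectrum ℝ J := by
  intro lam hlam
  rw [spectrum.mem_iff] at hlam
  by_contra hnot
  rw [spectrum.notMem_iff] at hnot
  apply hlam
  set T : Hint →L[ℝ] Hint := algebraMap ℝ (Hint →L[ℝ] Hint) lam - J with hT
  set T' : Hint →L[ℝ] Hint := algebraMap ℝ (Hint →L[ℝ] Hint) lam - J' with hT'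
  -- coordinates of T and T'
  have hTapp : ∀ (x : Hint) (k : ℤ), T x k = lam * x k - J x k := by
    intro x k
    rw [hT]
    rw [ContinuousLinearMap.sub_apply, Algebra.algebraMap_eq_smul_one,
      ContinuousLinearMap.smul_apply, ContinuousLinearMap.one_apply]
    rw [lp.coeFn_sub]
    simp [lp.coeFn_smul]
  have hT'app : ∀ (x : Hint) (k : ℤ), T' x k = lam * x k - J' x k := by
    intro x k
    rw [hT']
    rw [ContinuousLinearMap.sub_apply, Algebra.algebraMap_eq_smul_one,
      ContinuousLinearMap.smul_apply, ContinuousLinearMap.one_apply]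
    rw [lp.coeFn_sub]
    simp [lp.coeFn_smul]
  -- lower bound for T
  obtain ⟨u, hu⟩ := hnot
  set C : ℝ := ‖(↑u⁻¹ : Hint →L[ℝ] Hint)‖ + 1 with hCdef
  have hC : 0 < C := by positivity
  have hbb : ∀ x : Hint, ‖x‖ ≤ C * ‖T x‖ := by
    intro x
    have h1 : (↑u⁻¹ : Hint →L[ℝ] Hint) (T x) = x := by
      rw [← hu]
      calc (↑u⁻¹ : Hint →L[ℝ] Hint) ((↑u : Hint →L[ℝ] Hint) x)
          = ((↑u⁻¹ * ↑u : Hint →L[ℝ] Hint)) x := rfl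
        _ = x := by rw [u.inv_mul]; rfl
    calc ‖x‖ = ‖(↑u⁻¹ : Hint →L[ℝ] Hint) (T x)‖ := by rw [h1]
      _ ≤ ‖(↑u⁻¹ : Hint →L[ℝ] Hint)‖ * ‖T x‖ := ContinuousLinearMap.le_opNorm _ _
      _ ≤ C * ‖T x‖ := by
          have h2 := norm_nonneg (T x)
          have h3 : ‖(↑u⁻¹ : Hint →L[ℝ] Hint)‖ ≤ C := by rw [hCdef]; linarith
          exact mul_le_mul_of_nonneg_right h3 h2
  -- transfer of the lower bound to T'
  have hbb' : ∀ x : Hint, ‖x‖ ≤ C * ‖T' x‖ := by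
    intro x
    have hs : HasSum (fun i : ℤ => lp.single 2 i (x i)) x := lp.hasSum_single (by norm_num) x
    have l0 : Filter.Tendsto (fun s : Finset ℤ => ∑ i ∈ s, lp.single 2 i (x i))
        Filter.atTop (nhds x) := hs
    have key : ∀ s : Finset ℤ,
        ‖∑ i ∈ s, lp.single 2 i (x i)‖ ≤ C * ‖T' (∑ i ∈ s, lp.single 2 i (x i))‖ := by
      intro s
      set xs : Hint := ∑ i ∈ s, lp.single 2 i (x i) with hxsdef
      have hxsc : ∀ k : ℤ, xs k = if k ∈ s then x k else 0 := by
        intro k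
        rw [hxsdef]
        simp only [lp.coeFn_sum, lp.single_apply, Finset.sum_apply, eq_rec_constant,
          dite_eq_ite, Finset.sum_dite_eq]
        simp
      set N : ℕ := s.sup (fun i => i.natAbs) with hNdef
      have hNs : ∀ i ∈ s, i.natAbs ≤ N := fun i hi => Finset.le_sup hi
      have hxzero : ∀ k : ℤ, N < k.natAbs → xs k = 0 := by
        intro k hk
        rw [hxsc]
        split_ifs with hmem
        · exact absurd (hNs k hmem) (by omega)
        · rfl
      obtain ⟨τ, hτ⟩ := Stmt10Aux.window hχ hconcat hconcat' (N + 3)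
      have hd : ∀ m : ℤ, m.natAbs ≤ N + 3 → data (m + τ) = data' m := by
        intro m hm
        exact hτ m (by push_cast; omega) (by push_cast; omega)
      set y : Hint := ∑ i ∈ s, lp.single 2 (i + τ) (x i) with hydef
      have hyc : ∀ k : ℤ, y k = xs (k - τ) := by
        intro k
        rw [hxsc]
        have hterm : ∀ i ∈ s, (lp.single 2 (i + τ) (x i) : Hint) k
            = if i = k - τ then x i else 0 := by
          intro i _
          simp only [lp.single_apply, Pi.single_apply, eq_rec_constant, dite_eq_ite]
          split_ifs <;> first | rfl | (exfalso; omega)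
        calc y k = ∑ i ∈ s, (lp.single 2 (i + τ) (x i) : Hint) k := by
              rw [hydef, lp.coeFn_sum]; exact Finset.sum_apply _ _ _
          _ = ∑ i ∈ s, if i = k - τ then x i else 0 := Finset.sum_congr rfl hterm
          _ = if k - τ ∈ s then x (k - τ) else 0 := Finset.sum_ite_eq' s _ _
      have hny : ‖y‖ = ‖xs‖ := Stmt10Aux.norm_eq_of_shift τ y xs hyc
      have hTcoord : ∀ k : ℤ, T y k = T' xs (k - τ) := by
        intro k
        rw [hTapp, hT'app, hJ y k, hJ' xs (k - τ), hyc (k - 1), hyc k, hyc (k + 1)]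
        have e1 : k - 1 - τ = k - τ - 1 := by ring
        have e2 : k + 1 - τ = k - τ + 1 := by ring
        rw [e1, e2]
        by_cases hcase : (k - τ).natAbs ≤ N + 2
        · have h1 : data (k - 1) = data' (k - τ - 1) := by
            have := hd (k - τ - 1) (by omega)
            rw [← this]; congr 1; ring
          have h2 : data k = data' (k - τ) := by
            have := hd (k - τ) (by omega)
            rw [← this]; congr 1; ring
          have h3 : data (k + 1) = data' (k - τ + 1) := by
            have := hd (k - τ + 1) (by omega)
            rw [← this]; congr 1; ring
          have ha1 : aSeq data (k - 1) = aSeq data' (k - τ - 1) := by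
            unfold aSeq
            rw [sub_add_cancel, sub_add_cancel, h1, h2]
          have ha2 : aSeq data k = aSeq data' (k - τ) := by
            unfold aSeq
            rw [h2, h3]
          have hb : bSeq data k = bSeq data' (k - τ) := by
            unfold bSeq
            rw [h1, h2]
          rw [ha1, ha2, hb]
        · have hz1 : xs (k - τ - 1) = 0 := hxzero _ (by omega)
          have hz2 : xs (k - τ) = 0 := hxzero _ (by omega)
          have hz3 : xs (k - τ + 1) = 0 := hxzero _ (by omega)
          rw [hz1, hz2, hz3]
          ring
      have hnT : ‖T y‖ = ‖T' xs‖ := Stmt10Aux.norm_eq_of_shift τ (T y) (T' xs) hTcoord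
      calc ‖xs‖ = ‖y‖ := hny.symm
        _ ≤ C * ‖T y‖ := hbb y
        _ = C * ‖T' xs‖ := by rw [hnT]
    have l1 : Filter.Tendsto (fun s : Finset ℤ => ‖∑ i ∈ s, lp.single 2 i (x i)‖)
        Filter.atTop (nhds ‖x‖) := l0.norm
    have l2 : Filter.Tendsto (fun s : Finset ℤ => C * ‖T' (∑ i ∈ s, lp.single 2 i (x i))‖)
        Filter.atTop (nhds (C * ‖T' x‖)) :=
      (((T'.continuous.tendsto x).comp l0).norm).const_mul C
    exact le_of_tendsto_of_tendsto' l1 l2 key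
  -- T' is symmetric
  have hsym : ∀ z w : Hint, ⟪T' z, w⟫_ℝ = ⟪z, T' w⟫_ℝ := by
    have happ : ∀ z : Hint, T' z = lam • z - J' z := by
      intro z
      rw [hT', ContinuousLinearMap.sub_apply, Algebra.algebraMap_eq_smul_one,
        ContinuousLinearMap.smul_apply, ContinuousLinearMap.one_apply]
    intro z w
    rw [happ z, happ w, inner_sub_left, inner_sub_right, real_inner_smul_left,
      real_inner_smul_right, Stmt10Aux.jacobi_symm hJ' z w]
  -- T' is injective with closed range
  have hal : AntilipschitzWith ⟨C, hC.le⟩ T' :=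
    T'.antilipschitz_of_bound (fun x => hbb' x)
  -- dense range
  have hdense : (LinearMap.range (T' : Hint →ₗ[ℝ] Hint)).topologicalClosure = ⊤ := by
    rw [Submodule.topologicalClosure_eq_top_iff, Submodule.eq_bot_iff]
    intro v hv
    have h0 : ∀ z : Hint, ⟪T' z, v⟫_ℝ = 0 := fun z =>
      (Submodule.mem_orthogonal _ v).mp hv (T' z) ⟨z, rfl⟩
    have h1 : T' v = 0 := by
      have h2 : ⟪T' v, T' v⟫_ℝ = 0 := by rw [← hsym (T' v) v]; exact h0 (T' v)
      exact inner_self_eq_zero.mp h2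
    have h3 := hbb' v
    rw [h1, norm_zero, mul_zero] at h3
    exact norm_le_zero_iff.mp h3
  exact ContinuousLinearMap.isUnit_iff_bijective.mpr
    ((T'.bijective_iff_dense_range_and_antilipschitz).mpr ⟨hdense, ⟨C, hC.le⟩, hal⟩)
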